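/- Under the hypotheses that A has unit-norm columns with mutual coherence μ > 0, M is a unit-modulus PSK constellation with coherence γ, and K < min{(1+μ)/(2μ), (1+2μ-γ)/(2μ)}, the MAD greedy decoder (which at each step selects the (column, symbol) pair maximizing Re⟨r, b a_i⟩ over remaining columns and subtracts the detected term from the residual r) recovers the exact support {α_1,...,α_K} and the exact symbols β_1,...,β_K from the noiseless observation y = Σ_k β_k a_{α_k} in K iterations. -/

import Mathlib

open scoped ComplexInnerProductSpace

theorem stmt_14 (N L K : ℕ) (hK : 1 ≤ K)
    (a : Fin L → EuclideanSpace ℂ (Fin N))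
    (hnorm : ∀ i, ‖a i‖ = 1)
    (μ : ℝ) (hμpos : 0 < μ)
    (hμ : IsGreatest {x : ℝ | ∃ p q : Fin L, p ≠ q ∧ x = ‖⟪a p, a q⟫‖} μ)
    (M : Finset ℂ) (hM : ∀ b ∈ M, ‖b‖ = 1)
    (γ : ℝ)
    (hγ : IsGreatest
      {x : ℝ | ∃ b ∈ M, ∃ b' ∈ M, b ≠ b' ∧ x = ((starRingEnd ℂ) b * b').re} γ)
    (α : Fin K → Fin L) (hα : Function.Injective α)
    (β : Fin K → ℂ) (hβ : ∀ k, β k ∈ M)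
    (y : EuclideanSpace ℂ (Fin N))
    (hy : y = ∑ k : Fin K, β k • a (α k))
    (hKbound : (K : ℝ) < min ((1 + μ) / (2 * μ)) ((1 + 2 * μ - γ) / (2 * μ)))
    -- a run of the MAD greedy decoder on the noiseless observation `y`:
    (idx : ℕ → Fin L) (sym : ℕ → ℂ) (r : ℕ → EuclideanSpace ℂ (Fin N))
    (hr0 : r 0 = y)
    (hrec : ∀ t < K, r (t + 1) = r t - sym t • a (idx t))
    (hsym : ∀ t < K, sym t ∈ M)
    (hdistinct : ∀ t < K, ∀ u < t, idx t ≠ idx u)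
    (hgreedy : ∀ t < K, ∀ j : Fin L, (∀ u < t, j ≠ idx u) → ∀ b ∈ M,
      (⟪b • a j, r t⟫).re - ‖b‖ ^ 2 / 2
        ≤ (⟪sym t • a (idx t), r t⟫).re - ‖sym t‖ ^ 2 / 2) :
    ∃ σ : Equiv.Perm (Fin K),
      ∀ k : Fin K, idx (k : ℕ) = α (σ k) ∧ sym (k : ℕ) = β (σ k) := by
  classical
  have hβabs : ∀ k, ‖β k‖ = 1 := fun k => hM _ (hβ k)
  have hμub : ∀ p q : Fin L, p ≠ q → ‖⟪a p, a q⟫‖ ≤ μ := by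
    intro p q hpq
    have := hμ.2 ⟨p, q, hpq, rfl⟩
    simpa using this
  have hγub : ∀ b ∈ M, ∀ b' ∈ M, b ≠ b' → ((starRingEnd ℂ) b * b').re ≤ γ := by
    intro b hb b' hb' hne
    exact hγ.2 ⟨b, hb, b', hb', hne, rfl⟩
  have hself : ∀ j : Fin L, (⟪a j, a j⟫ : ℂ) = 1 := by
    intro j
    rw [inner_self_eq_norm_sq_to_K, hnorm]
    norm_num
  have hμ2 : (0:ℝ) < 2 * μ := by linarith
  have hK1 : 2 * (K:ℝ) * μ < 1 + μ := by
    have := (lt_min_iff.mp hKbound).1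
    rw [lt_div_iff₀ hμ2] at this; nlinarith
  have hK2 : 2 * (K:ℝ) * μ < 1 + 2*μ - γ := by
    have := (lt_min_iff.mp hKbound).2
    rw [lt_div_iff₀ hμ2] at this; nlinarith
  have main : ∀ t, t ≤ K →
      (r t = ∑ k ∈ Finset.univ.filter (fun k : Fin K => ∀ u < t, α k ≠ idx u),
          β k • a (α k)) ∧
      (Finset.univ.filter (fun k : Fin K => ∀ u < t, α k ≠ idx u)).card = K - t ∧
      (∀ u < t, ∃ k : Fin K, idx u = α k ∧ sym u = β k) := by
    intro t
    induction t with
    | zero =>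
      intro _
      refine ⟨?_, ?_, fun u hu => absurd hu (Nat.not_lt_zero u)⟩
      · simp [hr0, hy]
      · simp
    | succ t ih =>
      intro htK
      have ht : t < K := htK
      obtain ⟨hrt, hcard, hprev⟩ := ih ht.le
      set T := Finset.univ.filter (fun k : Fin K => ∀ u < t, α k ≠ idx u) with hT
      have hmemT : ∀ k : Fin K, k ∈ T ↔ ∀ u < t, α k ≠ idx u := by
        intro k; simp [hT]
      have hmpos : 1 ≤ T.card := by omega
      have hmK : (T.card : ℝ) ≤ K := by
        have : T.card ≤ K := by omega
        exact_mod_cast this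
      have hm1 : (1:ℝ) ≤ (T.card : ℝ) := by exact_mod_cast hmpos
      have hinner : ∀ (j : Fin L) (b : ℂ),
          (⟪b • a j, r t⟫ : ℂ) = ∑ k ∈ T, (starRingEnd ℂ) b * (β k * ⟪a j, a (α k)⟫) := by
        intro j b
        rw [hrt, inner_sum]
        refine Finset.sum_congr rfl fun k _ => ?_
        rw [inner_smul_left, inner_smul_right]
      have habs : ∀ (b : ℂ), ‖b‖ = 1 → ∀ (j : Fin L) (k : Fin K), j ≠ α k →
          ‖(starRingEnd ℂ) b * (β k * ⟪a j, a (α k)⟫)‖ ≤ μ := by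
        intro b hb j k hjk
        rw [norm_mul, norm_mul, Complex.norm_conj, hb, hβabs, one_mul, one_mul]
        exact hμub j (α k) hjk
      have E1 : ∀ k0 ∈ T, (1:ℝ) - ((T.card : ℝ) - 1) * μ ≤ (⟪β k0 • a (α k0), r t⟫).re := by
        intro k0 hk0
        rw [hinner, Complex.re_sum, ← Finset.sum_erase_add _ _ hk0]
        have hdiag : ((starRingEnd ℂ) (β k0) * (β k0 * ⟪a (α k0), a (α k0)⟫)).re = 1 := by
          rw [hself, mul_one, mul_comm, Complex.mul_conj]
          simp [Complex.normSq_eq_norm_sq, hβabs]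
        rw [hdiag]
        have hlow : ∀ k ∈ T.erase k0,
            -μ ≤ ((starRingEnd ℂ) (β k0) * (β k * ⟪a (α k0), a (α k)⟫)).re := by
          intro k hk
          have hkne : k ≠ k0 := (Finset.mem_erase.mp hk).1
          have hane : α k0 ≠ α k := fun h => hkne (hα h).symm
          have h1 : |((starRingEnd ℂ) (β k0) * (β k * ⟪a (α k0), a (α k)⟫)).re| ≤ μ :=
            le_trans (Complex.abs_re_le_norm _) (habs (β k0) (hβabs k0) (α k0) k hane)
          linarith [(abs_le.mp h1).1]
        have hsum := Finset.card_nsmul_le_sum (T.erase k0) _ (-μ) hlow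
        rw [nsmul_eq_mul] at hsum
        have hce : ((T.erase k0).card : ℝ) = (T.card : ℝ) - 1 := by
          rw [Finset.card_erase_of_mem hk0, Nat.cast_sub hmpos, Nat.cast_one]
        rw [hce] at hsum
        linarith
      have E2 : ∀ (j : Fin L) (b : ℂ), ‖b‖ = 1 → (∀ k ∈ T, j ≠ α k) →
          (⟪b • a j, r t⟫).re ≤ (T.card : ℝ) * μ := by
        intro j b hb hj
        rw [hinner, Complex.re_sum]
        have hub : ∀ k ∈ T, ((starRingEnd ℂ) b * (β k * ⟪a j, a (α k)⟫)).re ≤ μ := by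
          intro k hk
          exact le_trans (Complex.re_le_norm _) (habs b hb j k (hj k hk))
        calc ∑ k ∈ T, ((starRingEnd ℂ) b * (β k * ⟪a j, a (α k)⟫)).re
            ≤ ∑ _k ∈ T, μ := Finset.sum_le_sum hub
          _ = (T.card : ℝ) * μ := by rw [Finset.sum_const, nsmul_eq_mul]
      have E3 : ∀ k0 ∈ T, ∀ b ∈ M, b ≠ β k0 →
          (⟪b • a (α k0), r t⟫).re ≤ γ + ((T.card : ℝ) - 1) * μ := by
        intro k0 hk0 b hb hbne
        rw [hinner, Complex.re_sum, ← Finset.sum_erase_add _ _ hk0]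
        have hdiag : ((starRingEnd ℂ) b * (β k0 * ⟪a (α k0), a (α k0)⟫)).re ≤ γ := by
          rw [hself, mul_one]
          exact hγub b hb (β k0) (hβ k0) hbne
        have hub : ∀ k ∈ T.erase k0,
            ((starRingEnd ℂ) b * (β k * ⟪a (α k0), a (α k)⟫)).re ≤ μ := by
          intro k hk
          have hkne : k ≠ k0 := (Finset.mem_erase.mp hk).1
          have hane : α k0 ≠ α k := fun h => hkne (hα h).symm
          exact le_trans (Complex.re_le_norm _) (habs b (hM b hb) (α k0) k hane)
        have hsum : ∑ k ∈ T.erase k0, ((starRingEnd ℂ) b * (β k * ⟪a (α k0), a (α k)⟫)).re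
            ≤ ((T.erase k0).card : ℝ) * μ := by
          calc ∑ k ∈ T.erase k0, ((starRingEnd ℂ) b * (β k * ⟪a (α k0), a (α k)⟫)).re
              ≤ ∑ _k ∈ T.erase k0, μ := Finset.sum_le_sum hub
            _ = _ := by rw [Finset.sum_const, nsmul_eq_mul]
        have hce : ((T.erase k0).card : ℝ) = (T.card : ℝ) - 1 := by
          rw [Finset.card_erase_of_mem hk0, Nat.cast_sub hmpos, Nat.cast_one]
        rw [hce] at hsum
        linarith
      have hgr : ∀ (j : Fin L), (∀ u < t, j ≠ idx u) → ∀ b ∈ M, ‖b‖ = 1 →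
          (⟪b • a j, r t⟫).re ≤ (⟪sym t • a (idx t), r t⟫).re := by
        intro j hj b hb hb1
        have hg := hgreedy t ht j hj b hb
        have hs1 : ‖sym t‖ = 1 := hM _ (hsym t ht)
        rw [hb1, hs1] at hg
        linarith
      have hTne : T.Nonempty := Finset.card_pos.mp (by omega)
      have hstep : ∃ k1 ∈ T, idx t = α k1 := by
        by_contra hcon
        push_neg at hcon
        obtain ⟨k0, hk0⟩ := hTne
        have h1 := E1 k0 hk0
        have h2 := E2 (idx t) (sym t) (hM _ (hsym t ht)) hcon
        have h3 := hgr (α k0) ((hmemT k0).mp hk0) (β k0) (hβ k0) (hβabs k0)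
        nlinarith [mul_nonneg hμpos.le (sub_nonneg.mpr hmK)]
      obtain ⟨k1, hk1T, hidx⟩ := hstep
      have hsymeq : sym t = β k1 := by
        by_contra hne
        have h1 := E1 k1 hk1T
        have h3 := hgr (α k1) ((hmemT k1).mp hk1T) (β k1) (hβ k1) (hβabs k1)
        rw [hidx] at h3
        have h2 := E3 k1 hk1T (sym t) (hsym t ht) hne
        nlinarith [mul_nonneg hμpos.le (sub_nonneg.mpr hmK)]
      have hTsucc : Finset.univ.filter (fun k : Fin K => ∀ u < t + 1, α k ≠ idx u)
          = T.erase k1 := by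
        ext k
        simp only [Finset.mem_filter, Finset.mem_univ, true_and, Finset.mem_erase, hmemT]
        constructor
        · intro h
          refine ⟨?_, fun u hu => h u (Nat.lt_succ_of_lt hu)⟩
          intro hkk1
          exact h t (Nat.lt_succ_self t) (by rw [hkk1, hidx])
        · rintro ⟨hkne, h⟩ u hu
          rcases Nat.lt_succ_iff_lt_or_eq.mp hu with h' | rfl
          · exact h u h'
          · rw [hidx]
            exact fun hc => hkne (hα hc)
      refine ⟨?_, ?_, ?_⟩
      · rw [hTsucc, hrec t ht, hrt, hsymeq, hidx, Finset.sum_erase_eq_sub hk1T]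
      · rw [hTsucc, Finset.card_erase_of_mem hk1T, hcard]
        omega
      · intro u hu
        rcases Nat.lt_succ_iff_lt_or_eq.mp hu with h' | rfl
        · exact hprev u h'
        · exact ⟨k1, hidx, hsymeq⟩
  obtain ⟨-, -, hfin⟩ := main K le_rfl
  choose f hf1 hf2 using fun u : Fin K => hfin u u.isLt
  have hfinj : Function.Injective f := by
    intro u v huv
    by_contra hne
    have hid : idx (u : ℕ) = idx (v : ℕ) := by rw [hf1 u, hf1 v, huv]
    rcases lt_or_gt_of_ne (fun h : (u : ℕ) = (v : ℕ) => hne (Fin.ext h)) with h | h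
    · exact hdistinct v v.isLt u h hid.symm
    · exact hdistinct u u.isLt v h hid
  exact ⟨Equiv.ofBijective f (Finite.injective_iff_bijective.mp hfinj),
    fun k => ⟨hf1 k, hf2 k⟩⟩
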